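/- Let n ≥ 1, a ∈ ℤ, and let I = (i_1,…,i_r) be a partition of n into positive parts. Then A'(a,I) = 0; that is, coeff_{x·y^{n−1}}(∏_{q=1}^r c'_{i_q}(a)) + a·coeff_{y^n}(∏_{q=1}^r c'_{i_q}(a)) = 0. (This is Proposition 2.7(ii): every Chern number of the stably complex manifold (P^n(a), c_𝒯(a)) vanishes, hence by the Milnor–Novikov theorem this stably complex manifold bounds.) -/

import Mathlib

open MvPolynomial Finset

/-- `x = X 0` in `ℤ[x,y]`. -/
noncomputable def xv : MvPolynomial (Fin 2) ℤ := MvPolynomial.X 0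

/-- `y = X 1` in `ℤ[x,y]`. -/
noncomputable def yv : MvPolynomial (Fin 2) ℤ := MvPolynomial.X 1

/-- The `i`-th Chern class `c_i(a)` of the tangent bundle of `P^n(a)`:
`C(n,i)·y^i + (2·C(n,i−1) − a·C(n−1,i−1))·x·y^{i−1}`. -/
noncomputable def chern (n : ℕ) (a : ℤ) (i : ℕ) : MvPolynomial (Fin 2) ℤ :=
  MvPolynomial.C (n.choose i : ℤ) * yv ^ i
    + MvPolynomial.C (2 * (n.choose (i - 1) : ℤ) - a * ((n - 1).choose (i - 1) : ℤ))
      * xv * yv ^ (i - 1)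

/-- Coefficient of the monomial `x·y^{n-1}`. -/
noncomputable def coeffXY (n : ℕ) (f : MvPolynomial (Fin 2) ℤ) : ℤ :=
  f.coeff (Finsupp.single (0 : Fin 2) 1 + Finsupp.single (1 : Fin 2) (n - 1))

/-- Coefficient of the monomial `y^n`. -/
noncomputable def coeffY (n : ℕ) (f : MvPolynomial (Fin 2) ℤ) : ℤ :=
  f.coeff (Finsupp.single (1 : Fin 2) n)

/-- The Chern number `A(a,I) = coeff_{x·y^{n−1}}(∏ c_{i_q}(a)) + a·coeff_{y^n}(∏ c_{i_q}(a))`. -/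
noncomputable def chernNum (n : ℕ) (a : ℤ) {r : ℕ} (i : Fin r → ℕ) : ℤ :=
  coeffXY n (∏ q, chern n a (i q)) + a * coeffY n (∏ q, chern n a (i q))

/-- The `i`-th Chern class `c'_i(a)` of the non-standard stably complex structure
`c_𝒯(a)` on `P^n(a)`: `C(n,i)·y^i − a·C(n−1,i−1)·x·y^{i−1}`. -/
noncomputable def chern' (n : ℕ) (a : ℤ) (i : ℕ) : MvPolynomial (Fin 2) ℤ :=
  MvPolynomial.C (n.choose i : ℤ) * yv ^ i
    - MvPolynomial.C (a * ((n - 1).choose (i - 1) : ℤ)) * xv * yv ^ (i - 1)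

/-- The Chern number `A'(a,I)` of `(P^n(a), c_𝒯(a))`. -/
noncomputable def chernNum' (n : ℕ) (a : ℤ) {r : ℕ} (i : Fin r → ℕ) : ℤ :=
  coeffXY n (∏ q, chern' n a (i q)) + a * coeffY n (∏ q, chern' n a (i q))

/- ---------------- auxiliary lemmas ---------------- -/

/-- Coefficient of a monomial with `x`-exponent `≤ 1` in `x² · g` vanishes. -/
lemma coeff_xsq_mul (m : Fin 2 →₀ ℕ) (h : m 0 ≤ 1) (g : MvPolynomial (Fin 2) ℤ) :
    (xv ^ 2 * g).coeff m = 0 := by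
  rw [xv, sq, mul_assoc, MvPolynomial.coeff_X_mul']
  split_ifs with h0
  · rw [MvPolynomial.coeff_X_mul', if_neg]
    intro hc
    rw [Finsupp.mem_support_iff, Finsupp.tsub_apply] at hc
    rw [Finsupp.mem_support_iff] at h0
    simp only [Finsupp.single_apply, if_true] at hc
    omega
  · rfl

/-- Splitting a product of `A q + x·h q` modulo `x²`. -/
lemma prod_split {ι : Type} [DecidableEq ι] (s : Finset ι)
    (A h : ι → MvPolynomial (Fin 2) ℤ) :
    ∃ g, ∏ q ∈ s, (A q + xv * h q)
      = ∏ q ∈ s, A q + xv * ∑ q ∈ s, h q * ∏ p ∈ s.erase q, A p + xv ^ 2 * g := by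
  classical
  induction s using Finset.induction with
  | empty => exact ⟨0, by simp⟩
  | @insert q s hq ih =>
    obtain ⟨g, hg⟩ := ih
    refine ⟨A q * g + h q * ∑ p ∈ s, h p * ∏ t ∈ s.erase p, A t + xv * h q * g, ?_⟩
    rw [Finset.prod_insert hq, hg, Finset.prod_insert hq,
        Finset.sum_insert hq, Finset.erase_insert hq]
    have hsum : ∑ p ∈ s, h p * ∏ t ∈ (insert q s).erase p, A t
        = A q * ∑ p ∈ s, h p * ∏ t ∈ s.erase p, A t := by
      rw [Finset.mul_sum]
      refine Finset.sum_congr rfl fun p hp => ?_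
      have hpq : q ≠ p := fun h => hq (h ▸ hp)
      rw [Finset.erase_insert_of_ne hpq,
        Finset.prod_insert (fun hc => hq (Finset.mem_of_mem_erase hc))]
      ring
    rw [hsum]
    ring

lemma prod_CY {ι : Type} (s : Finset ι) (c : ι → ℤ) (e : ι → ℕ) :
    ∏ q ∈ s, (MvPolynomial.C (c q) * yv ^ e q)
      = MvPolynomial.C (∏ q ∈ s, c q) * yv ^ (∑ q ∈ s, e q) := by
  rw [Finset.prod_mul_distrib, Finset.prod_pow_eq_pow_sum, map_prod]

lemma Cyn_eq (k : ℤ) (m : ℕ) :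
    MvPolynomial.C k * yv ^ m = MvPolynomial.monomial (Finsupp.single (1 : Fin 2) m) k := by
  rw [yv, MvPolynomial.C_mul_X_pow_eq_monomial]

lemma Cxy_eq (k : ℤ) (m : ℕ) :
    MvPolynomial.C k * xv * yv ^ m
      = MvPolynomial.monomial
          (Finsupp.single (0 : Fin 2) 1 + Finsupp.single (1 : Fin 2) m) k := by
  have h1 : MvPolynomial.C k * xv = MvPolynomial.monomial (Finsupp.single (0 : Fin 2) 1) k := by
    rw [xv, ← pow_one (MvPolynomial.X (0 : Fin 2)), MvPolynomial.C_mul_X_pow_eq_monomial]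
  rw [h1, yv, MvPolynomial.X_pow_eq_monomial, MvPolynomial.monomial_mul, mul_one]

lemma mono_ne (n m : ℕ) :
    Finsupp.single (1 : Fin 2) m
      ≠ Finsupp.single (0 : Fin 2) 1 + Finsupp.single (1 : Fin 2) (n - 1) := by
  intro h
  have := DFunLike.congr_fun h (0 : Fin 2)
  simp [Finsupp.single_apply] at this

lemma coeffXY_Cyn (n m : ℕ) (k : ℤ) : coeffXY n (MvPolynomial.C k * yv ^ m) = 0 := by
  rw [coeffXY, Cyn_eq, MvPolynomial.coeff_monomial, if_neg (mono_ne n m)]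

lemma coeffXY_Cxy (n : ℕ) (k : ℤ) : coeffXY n (MvPolynomial.C k * xv * yv ^ (n - 1)) = k := by
  rw [coeffXY, Cxy_eq, MvPolynomial.coeff_monomial, if_pos rfl]

lemma coeffY_Cyn (n : ℕ) (k : ℤ) : coeffY n (MvPolynomial.C k * yv ^ n) = k := by
  rw [coeffY, Cyn_eq, MvPolynomial.coeff_monomial, if_pos rfl]

lemma mono_ne' (n m : ℕ) :
    Finsupp.single (0 : Fin 2) 1 + Finsupp.single (1 : Fin 2) m
      ≠ Finsupp.single (1 : Fin 2) n := by
  intro h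
  have := DFunLike.congr_fun h (0 : Fin 2)
  simp [Finsupp.single_apply] at this

lemma coeffY_Cxy (n m : ℕ) (k : ℤ) : coeffY n (MvPolynomial.C k * xv * yv ^ m) = 0 := by
  rw [coeffY, Cxy_eq, MvPolynomial.coeff_monomial, if_neg (mono_ne' n m)]

/-- The key combinatorial identity. -/
lemma key_identity (n r : ℕ) (hn : 1 ≤ n) (i : Fin r → ℕ) (hi : ∀ q, 1 ≤ i q)
    (hsum : ∑ q, i q = n) :
    ∑ q, (((n - 1).choose (i q - 1) : ℤ) * ∏ p ∈ Finset.univ.erase q, (n.choose (i p) : ℤ))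
      = ∏ q, (n.choose (i q) : ℤ) := by
  have hn0 : (n : ℤ) ≠ 0 := by exact_mod_cast (by omega : n ≠ 0)
  apply mul_left_cancel₀ hn0
  rw [Finset.mul_sum]
  have hterm : ∀ q : Fin r, (n : ℤ) * (((n - 1).choose (i q - 1) : ℤ)
        * ∏ p ∈ Finset.univ.erase q, (n.choose (i p) : ℤ))
      = (i q : ℤ) * ∏ p, (n.choose (i p) : ℤ) := by
    intro q
    have h2 : n * ((n - 1).choose (i q - 1)) = n.choose (i q) * i q := by
      have h3 := Nat.add_one_mul_choose_eq (n - 1) (i q - 1)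
      have e1 : (n - 1) + 1 = n := by omega
      have e2 : (i q - 1) + 1 = i q := by have := hi q; omega
      rw [e1, e2] at h3
      exact h3
    have h2' : (n : ℤ) * ((n - 1).choose (i q - 1) : ℤ)
        = (n.choose (i q) : ℤ) * (i q : ℤ) := by exact_mod_cast congrArg (Nat.cast : ℕ → ℤ) h2
    rw [← mul_assoc, h2', mul_comm ((n.choose (i q) : ℤ)) ((i q : ℤ)), mul_assoc,
      Finset.mul_prod_erase Finset.univ (fun p => ((n.choose (i p) : ℤ))) (Finset.mem_univ q)]
  rw [Finset.sum_congr rfl (fun q _ => hterm q), ← Finset.sum_mul, ← Nat.cast_sum, hsum]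

/-- `A'(a,I) = 0`: every Chern number of the stably complex manifold
`(P^n(a), c_𝒯(a))` vanishes, hence this stably complex manifold bounds
(Proposition 2.7(ii)). -/
theorem chernNum'_eq_zero (n r : ℕ) (hn : 1 ≤ n) (hr : 1 ≤ r)
    (i : Fin r → ℕ) (hi : ∀ q, 1 ≤ i q) (hsum : ∑ q, i q = n) (a : ℤ) :
    chernNum' n a i = 0 := by
  classical
  set c : Fin r → ℤ := fun q => (n.choose (i q) : ℤ) with hc
  set d : Fin r → ℤ := fun q => -(a * (((n - 1).choose (i q - 1)) : ℤ)) with hd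
  have hch : ∀ q : Fin r, chern' n a (i q)
      = MvPolynomial.C (c q) * yv ^ (i q) + xv * (MvPolynomial.C (d q) * yv ^ (i q - 1)) := by
    intro q
    simp only [chern', hc, hd, map_neg]
    ring
  obtain ⟨g, hg⟩ := prod_split Finset.univ
    (fun q => MvPolynomial.C (c q) * yv ^ (i q))
    (fun q => MvPolynomial.C (d q) * yv ^ (i q - 1))
  have hterm : ∀ q : Fin r,
      (MvPolynomial.C (d q) * yv ^ (i q - 1))
          * ∏ p ∈ Finset.univ.erase q, (MvPolynomial.C (c p) * yv ^ (i p))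
        = MvPolynomial.C (d q * ∏ p ∈ Finset.univ.erase q, c p) * yv ^ (n - 1) := by
    intro q
    have hexp : (i q - 1) + ∑ p ∈ Finset.univ.erase q, i p = n - 1 := by
      have h4 := Finset.add_sum_erase Finset.univ i (Finset.mem_univ q)
      have h5 := hi q
      omega
    rw [prod_CY, mul_mul_mul_comm, ← map_mul, ← pow_add, hexp]
  have hP : ∏ q, chern' n a (i q)
      = MvPolynomial.C (∏ q, c q) * yv ^ n
        + MvPolynomial.C (∑ q, d q * ∏ p ∈ Finset.univ.erase q, c p) * xv * yv ^ (n - 1)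
        + xv ^ 2 * g := by
    rw [Finset.prod_congr rfl (fun q _ => hch q), hg, prod_CY, hsum,
      Finset.sum_congr rfl (fun q _ => hterm q), ← Finset.sum_mul, ← map_sum]
    ring
  have hXY : coeffXY n (∏ q, chern' n a (i q))
      = ∑ q, d q * ∏ p ∈ Finset.univ.erase q, c p := by
    rw [hP]
    simp only [coeffXY] at *
    rw [MvPolynomial.coeff_add, MvPolynomial.coeff_add]
    have e1 := coeffXY_Cyn n n (∏ q, c q)
    have e2 := coeffXY_Cxy n (∑ q, d q * ∏ p ∈ Finset.univ.erase q, c p)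
    have e3 := coeff_xsq_mul
      (Finsupp.single (0 : Fin 2) 1 + Finsupp.single (1 : Fin 2) (n - 1))
      (by simp [Finsupp.single_apply]) g
    simp only [coeffXY] at e1 e2
    rw [e1, e2, e3]
    ring
  have hY : coeffY n (∏ q, chern' n a (i q)) = ∏ q, c q := by
    rw [hP]
    simp only [coeffY] at *
    rw [MvPolynomial.coeff_add, MvPolynomial.coeff_add]
    have e1 := coeffY_Cyn n (∏ q, c q)
    have e2 := coeffY_Cxy n (n - 1) (∑ q, d q * ∏ p ∈ Finset.univ.erase q, c p)
    have e3 := coeff_xsq_mul (Finsupp.single (1 : Fin 2) n)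
      (by simp [Finsupp.single_apply]) g
    simp only [coeffY] at e1 e2
    rw [e1, e2, e3]
    ring
  rw [chernNum', hXY, hY]
  have hkey := key_identity n r hn i hi hsum
  have hs : ∑ q, d q * ∏ p ∈ Finset.univ.erase q, c p
      = -a * ∑ q, (((n - 1).choose (i q - 1) : ℤ)
          * ∏ p ∈ Finset.univ.erase q, (n.choose (i p) : ℤ)) := by
    rw [Finset.mul_sum]
    refine Finset.sum_congr rfl fun q _ => ?_
    simp only [hd, hc]
    ring
  rw [hs, hkey]
  simp only [hc]
  ring
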